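/- Let W ∈ ℝ^{n×n} and m > 0 satisfy (I − W) ⪰ mI, and let J ∈ ℝ^{n×n} be diagonal with 0 ≤ Jᵢᵢ ≤ 1 for all i. Then the matrix I − J W is invertible. (Consequently the implicit-differentiation Jacobian formula for the equilibrium network always exists.) -/

import Mathlib

open Matrix

/-- **Invertibility of `I - JW` (existence of the backward-pass Jacobian).**
If `I - W ⪰ mI` with `m > 0` and `J` is diagonal with `0 ≤ Jᵢᵢ ≤ 1`, then the matrix
`I - J W` is invertible. -/
theorem I_sub_JW_invertible (n : ℕ)
    (W : Matrix (Fin n) (Fin n) ℝ) (m : ℝ) (hm : 0 < m)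
    (hmono : ((1/2 : ℝ) • ((1 - W) + (1 - W)ᵀ) -
        m • (1 : Matrix (Fin n) (Fin n) ℝ)).PosSemidef)
    (d : Fin n → ℝ) (hd : ∀ i, 0 ≤ d i ∧ d i ≤ 1) :
    IsUnit (1 - Matrix.diagonal d * W : Matrix (Fin n) (Fin n) ℝ) := by
  rw [Matrix.isUnit_iff_isUnit_det, isUnit_iff_ne_zero]
  intro hdet
  obtain ⟨v, hv0, hv⟩ := Matrix.exists_mulVec_eq_zero_iff.mpr hdet
  set y := W.mulVec v with hy
  have hvi : ∀ i, v i = d i * y i := by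
    intro i
    have h := congrFun hv i
    simp only [Matrix.sub_mulVec, Matrix.one_mulVec, ← Matrix.mulVec_mulVec,
      Matrix.mulVec_diagonal, Pi.sub_apply, Pi.zero_apply, sub_eq_zero, ← hy] at h
    exact h
  have hpsd := hmono.dotProduct_mulVec_nonneg v
  have hstar : star v = v := by simp
  have hWt : v ⬝ᵥ (Wᵀ *ᵥ v) = v ⬝ᵥ y := by
    rw [Matrix.mulVec_transpose, hy, Matrix.dotProduct_mulVec, dotProduct_comm]
  have key : 0 ≤ v ⬝ᵥ v - v ⬝ᵥ y - m * (v ⬝ᵥ v) := by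
    have : v ⬝ᵥ (((1/2 : ℝ) • ((1 - W) + (1 - W)ᵀ) -
        m • (1 : Matrix (Fin n) (Fin n) ℝ)) *ᵥ v)
        = v ⬝ᵥ v - v ⬝ᵥ y - m * (v ⬝ᵥ v) := by
      simp only [Matrix.sub_mulVec, Matrix.add_mulVec, Matrix.smul_mulVec,
        Matrix.one_mulVec, Matrix.transpose_sub, Matrix.transpose_one,
        dotProduct_sub, dotProduct_add, dotProduct_smul,
        hWt, ← hy, smul_eq_mul]
      ring
    rw [hstar, this] at hpsd
    exact hpsd
  have ha : 0 < v ⬝ᵥ v := by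
    rw [← hstar]
    exact Matrix.dotProduct_self_star_pos_iff.mpr hv0
  have hab : v ⬝ᵥ v ≤ v ⬝ᵥ y := by
    have : v ⬝ᵥ v - v ⬝ᵥ y = ∑ i, (d i * d i - d i) * (y i * y i) := by
      simp only [dotProduct, ← Finset.sum_sub_distrib]
      refine Finset.sum_congr rfl fun i _ => ?_
      rw [hvi i]; ring
    have hle : ∑ i, (d i * d i - d i) * (y i * y i) ≤ 0 := by
      apply Finset.sum_nonpos
      intro i _
      have h1 : d i * d i - d i ≤ 0 := by nlinarith [(hd i).1, (hd i).2]
      exact mul_nonpos_of_nonpos_of_nonneg h1 (mul_self_nonneg _)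
    linarith
  nlinarith
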